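/- arXiv:1110.1741 — 3 statements merged into one kernel-verified Lean document; each statement's English description precedes it below -/
import Mathlib

section
/- Let M be an invertible m×m matrix over ℤ (so det M = ±1) with spectral radius ρ > 1. Then ρ is irrational. -/
open Polynomial

/-- If an invertible integer matrix (determinant ±1) has spectral radius `ρ > 1`,
then `ρ` is irrational. -/
theorem spectral_radius_of_unimodular_irrational {m : ℕ}
    (M : Matrix (Fin m) (Fin m) ℤ) (hdet : M.det = 1 ∨ M.det = -1) (ρ : ℝ)
    (hρ : IsGreatest {r : ℝ | ∃ lam : ℂ,
        (∃ v : Fin m → ℂ, v ≠ 0 ∧ (M.map (Int.cast : ℤ → ℂ)).mulVec v = lam • v) ∧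
        ‖lam‖ = r} ρ)
    (hρ1 : 1 < ρ) : Irrational ρ := by
  rintro ⟨s, hs⟩
  obtain ⟨⟨lam, ⟨v, hv0, hev⟩, habs⟩, -⟩ := hρ
  set A : Matrix (Fin m) (Fin m) ℂ := M.map (Int.cast : ℤ → ℂ) with hA
  -- `lam` is a root of the characteristic polynomial of `A`
  have hdet0 : ((lam • (1 : Matrix (Fin m) (Fin m) ℂ)) - A).det = 0 := by
    rw [← Matrix.exists_mulVec_eq_zero_iff]
    refine ⟨v, hv0, ?_⟩
    rw [Matrix.sub_mulVec, hev, Matrix.smul_mulVec, Matrix.one_mulVec, sub_self]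
  have hroot : A.charpoly.eval lam = 0 := by
    rw [Matrix.charpoly, ← Polynomial.coe_evalRingHom, RingHom.map_det]
    convert hdet0
    ext i j
    by_cases h : i = j <;>
      simp [Matrix.charmatrix_apply, Matrix.one_apply, h, Matrix.smul_apply,
        Matrix.sub_apply, Matrix.diagonal_apply]
  -- hence integral over ℤ
  have haev : Polynomial.aeval lam M.charpoly = 0 := by
    rw [Polynomial.aeval_def, Polynomial.eval₂_eq_eval_map]
    have : M.charpoly.map (algebraMap ℤ ℂ) = A.charpoly :=
      (Matrix.charpoly_map M (Int.castRingHom ℂ)).symm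
    rw [this, hroot]
  have hint : IsIntegral ℤ lam := ⟨M.charpoly, M.charpoly_monic, haev⟩
  set q : ℤ[X] := minpoly ℤ lam with hq
  have hqmonic : q.Monic := minpoly.monic hint
  have hqdvd : q ∣ M.charpoly := minpoly.isIntegrallyClosed_dvd hint haev
  -- constant coefficient of q is ±1
  have hc : q.coeff 0 = 1 ∨ q.coeff 0 = -1 := by
    rw [← Int.isUnit_iff]
    have hdvd0 : q.coeff 0 ∣ M.charpoly.coeff 0 := by
      obtain ⟨k, hk⟩ := hqdvd
      exact ⟨k.coeff 0, by rw [hk, Polynomial.mul_coeff_zero]⟩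
    have hu : IsUnit M.det := by rcases hdet with h | h <;> simp [h]
    have h := Matrix.det_eq_sign_charpoly_coeff M
    rw [h] at hu
    exact isUnit_of_dvd_unit hdvd0 (isUnit_of_mul_isUnit_right hu)
  -- move to ℚ
  set Q : ℚ[X] := q.map (algebraMap ℤ ℚ) with hQdef
  have hQmin : minpoly ℚ lam = Q := by
    exact minpoly.isIntegrallyClosed_eq_field_fractions ℚ ℂ hint
  have hQmonic : Q.Monic := hqmonic.map _
  have hQdeg : Q.natDegree = q.natDegree := hqmonic.natDegree_map _
  have hd1 : 1 ≤ q.natDegree := minpoly.natDegree_pos hint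
  set d : ℕ := q.natDegree with hd
  have hQc0 : Q.coeff 0 = (q.coeff 0 : ℚ) := by simp [hQdef]
  have hQc0sq : Q.coeff 0 * Q.coeff 0 = 1 := by
    rw [hQc0]; rcases hc with h | h <;> rw [h] <;> norm_num
  have hQc0ne : Q.coeff 0 ≠ 0 := by
    intro h; rw [h] at hQc0sq; simp at hQc0sq
  -- lam ≠ 0
  have hlam0 : lam ≠ 0 := by
    intro h
    rw [h] at habs
    simp at habs
    rw [← habs] at hρ1
    norm_num at hρ1
  -- the key polynomial r
  set t : ℚ := s * s with ht
  have htlam : (algebraMap ℚ ℂ t) * lam⁻¹ = (starRingEnd ℂ) lam := by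
    have h1 : lam * (starRingEnd ℂ) lam = ((‖lam‖ : ℝ) : ℂ) * ((‖lam‖ : ℝ) : ℂ) := by
      rw [Complex.mul_conj]
      norm_cast
      rw [← Complex.sq_norm]
      ring
    have h2 : (algebraMap ℚ ℂ t) = lam * (starRingEnd ℂ) lam := by
      rw [h1, habs, ← hs, ht]
      push_cast
      norm_cast
    rw [h2]
    field_simp
  set r : ℚ[X] := (Q.reverse).scaleRoots t with hr
  have haevQ : Polynomial.aeval lam Q = 0 := by rw [← hQmin]; exact minpoly.aeval ℚ lam
  have hrev : Polynomial.aeval lam⁻¹ Q.reverse = 0 := by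
    have : Invertible lam := invertibleOfNonzero hlam0
    rw [Polynomial.aeval_def]
    rw [show lam⁻¹ = ⅟lam from (invOf_eq_inv lam).symm]
    rw [Polynomial.eval₂_reverse_eq_zero_iff]
    rw [← Polynomial.aeval_def]
    exact haevQ
  have hconjroot : Polynomial.aeval ((starRingEnd ℂ) lam) r = 0 := by
    rw [← htlam]
    exact Polynomial.scaleRoots_aeval_eq_zero hrev
  have hrroot : Polynomial.aeval lam r = 0 := by
    have := congrArg (starRingEnd ℂ) hconjroot
    rw [Polynomial.aeval_def, Polynomial.hom_eval₂] at this
    rw [Complex.conj_conj, map_zero] at this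
    rw [Polynomial.aeval_def]
    convert this using 2
    exact (RingHom.ext_rat _ _)
  -- Q divides r
  have hQr : Q ∣ r := by
    rw [← hQmin]
    exact minpoly.dvd ℚ lam hrroot
  -- degree bookkeeping
  have hQtd : Q.natTrailingDegree = 0 := Polynomial.natTrailingDegree_eq_zero.mpr (Or.inr hQc0ne)
  have hrevdeg : Q.reverse.natDegree = d := by
    rw [Polynomial.reverse_natDegree, hQtd, hQdeg]
    omega
  have hrdeg : r.natDegree = d := by
    rw [hr, Polynomial.natDegree_scaleRoots, hrevdeg]
  have hrd : r.coeff d = Q.coeff 0 := by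
    rw [hr, Polynomial.coeff_scaleRoots, hrevdeg, Nat.sub_self, pow_zero, mul_one]
    rw [Polynomial.reverse, Polynomial.coeff_reflect, ← hQdeg]
    rw [Polynomial.revAt_le (le_refl _), Nat.sub_self]
  have hr0 : r.coeff 0 = t ^ d := by
    rw [hr, Polynomial.coeff_scaleRoots, hrevdeg, Nat.sub_zero]
    rw [Polynomial.coeff_zero_reverse, hQmonic.leadingCoeff, one_mul]
  -- r = Q * C (Q.coeff 0)
  obtain ⟨k, hk⟩ := hQr
  have hrne : r ≠ 0 := by
    intro h
    rw [h, Polynomial.coeff_zero] at hrd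
    exact hQc0ne hrd.symm
  have hkne : k ≠ 0 := by rintro rfl; rw [mul_zero] at hk; exact hrne hk
  have hkdeg : k.natDegree = 0 := by
    have := Polynomial.natDegree_mul (hQmonic.ne_zero) hkne
    rw [← hk, hrdeg, hQdeg] at this
    omega
  obtain ⟨a, rfl⟩ : ∃ a, k = C a := ⟨k.coeff 0, Polynomial.eq_C_of_natDegree_eq_zero hkdeg⟩
  have ha : a = Q.coeff 0 := by
    have := congrArg (fun p => Polynomial.coeff p d) hk
    simp only [Polynomial.coeff_mul_C] at this
    rw [hrd, ← hQdeg] at this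
    rw [Polynomial.coeff_natDegree, hQmonic.leadingCoeff, one_mul] at this
    exact this.symm
  have hfinal : t ^ d = 1 := by
    have := congrArg (fun p => Polynomial.coeff p 0) hk
    simp only [Polynomial.coeff_mul_C] at this
    rw [hr0, ha, hQc0sq] at this
    exact this
  -- contradiction: t > 1
  have hs1 : (1:ℝ) < |(s:ℝ)| := lt_of_lt_of_le hρ1 (by rw [hs]; exact le_abs_self _)
  have ht1 : (1:ℚ) < t := by
    have : (1:ℝ) < (t:ℝ) := by
      push_cast [ht]
      calc (1:ℝ) = 1 * 1 := by ring
        _ < |(s:ℝ)| * |(s:ℝ)| := by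
            apply mul_lt_mul' (le_of_lt hs1) hs1 (by norm_num) (by linarith)
        _ = (s:ℝ) * (s:ℝ) := by rw [← abs_mul, abs_of_nonneg (mul_self_nonneg _)]
    exact_mod_cast this
  have : (1:ℚ) < t ^ d := one_lt_pow₀ ht1 (by omega)
  rw [hfinal] at this
  exact lt_irrefl _ this
end

section
/- For n ≥ 0, define χ_n(t) = t^{n+1}(t³ − t − 1) + t³ + t² − 1. Then for n ≥ 7, χ_n has a real root strictly greater than 1. -/
/-- The characteristic polynomial `χ_n(t) = t^{n+1}(t³−t−1) + t³+t²−1`. -/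
noncomputable def chi (n : ℕ) (t : ℝ) : ℝ :=
  t ^ (n + 1) * (t ^ 3 - t - 1) + t ^ 3 + t ^ 2 - 1

/-- For `n ≥ 7`, `χ_n` has a real root strictly greater than 1. -/
theorem chi_has_root_gt_one (n : ℕ) (hn : 7 ≤ n) :
    ∃ t : ℝ, 1 < t ∧ chi n t = 0 := by
  have hcont : ContinuousOn (chi n) (Set.Icc (1.1 : ℝ) 2) := by
    apply Continuous.continuousOn
    unfold chi
    continuity
  have hneg : chi n (1.1 : ℝ) < 0 := by
    unfold chi
    have hpow : (1.1 : ℝ) ^ 8 ≤ (1.1 : ℝ) ^ (n + 1) :=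
      pow_le_pow_right₀ (by norm_num) (by omega)
    have hfac : ((1.1 : ℝ) ^ 3 - 1.1 - 1) < 0 := by norm_num
    have : (1.1 : ℝ) ^ (n + 1) * ((1.1 : ℝ) ^ 3 - 1.1 - 1) ≤
        (1.1 : ℝ) ^ 8 * ((1.1 : ℝ) ^ 3 - 1.1 - 1) :=
      mul_le_mul_of_nonpos_right hpow (le_of_lt hfac)
    nlinarith [this]
  have hpos : 0 < chi n (2 : ℝ) := by
    unfold chi
    have h1 : (1 : ℝ) ≤ (2 : ℝ) ^ (n + 1) := one_le_pow₀ (by norm_num)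
    nlinarith [h1]
  have hmem : (0 : ℝ) ∈ Set.Ioo (chi n 1.1) (chi n 2) := ⟨hneg, hpos⟩
  obtain ⟨t, htmem, ht0⟩ := intermediate_value_Ioo (by norm_num : (1.1:ℝ) ≤ 2) hcont hmem
  exact ⟨t, by linarith [htmem.1], ht0⟩
end

section
/- Define χ_n(t) = t^{n+1}(t³ − t − 1) + t³ + t² − 1 and let λ_n denote its largest real root, assumed > 1 for n ≥ 7. Then the sequence λ_n is strictly increasing in n for n ≥ 7, i.e., λ_{n+1} > λ_n. -/
/-- The largest real roots `λ_n` of `χ_n` (assumed `> 1` for `n ≥ 7`) are strictly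
increasing in `n`: `λ_{n+1} > λ_n`. -/
theorem chi_largest_root_increasing (n : ℕ) (hn : 7 ≤ n) (a b : ℝ)
    (ha1 : 1 < a) (haroot : chi n a = 0) (hamax : ∀ t : ℝ, chi n t = 0 → t ≤ a)
    (hb1 : 1 < b) (hbroot : chi (n + 1) b = 0)
    (hbmax : ∀ t : ℝ, chi (n + 1) t = 0 → t ≤ b) :
    a < b := by
  -- χ_{n+1}(a) = a·χ_n(a) + (1-a)(a³+a²-1) = (1-a)(a³+a²-1) < 0
  have hna : chi (n+1) a = (1 - a) * (a^3 + a^2 - 1) := by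
    have : chi (n+1) a = a * chi n a + (1 - a) * (a^3 + a^2 - 1) := by
      unfold chi; ring
    rw [this, haroot]; ring
  have hA : chi (n+1) a < 0 := by
    rw [hna]
    have h1 : 0 < a^3 + a^2 - 1 := by nlinarith
    have h2 : 1 - a < 0 := by linarith
    exact mul_neg_of_neg_of_pos h2 h1
  -- χ_{n+1}(a+1) > 0 since a+1 ≥ 2
  have h2 : (2:ℝ) ≤ a + 1 := by linarith
  have hpow : (1:ℝ) ≤ (a+1) ^ (n+1+1) := one_le_pow₀ (by linarith : (1:ℝ) ≤ a+1)
  have hB : 0 < chi (n+1) (a+1) := by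
    unfold chi
    have hq : 0 < (a+1)^3 - (a+1) - 1 := by nlinarith
    nlinarith [mul_pos (lt_of_lt_of_le one_pos hpow) hq, mul_le_mul_of_nonneg_right hpow (le_of_lt hq)]
  -- IVT
  have hcont : ContinuousOn (chi (n+1)) (Set.Icc a (a+1)) := by
    unfold chi; fun_prop
  obtain ⟨c, hc, hcz⟩ := intermediate_value_Icc (by linarith : a ≤ a + 1) hcont
    (Set.mem_Icc.mpr ⟨le_of_lt hA, le_of_lt hB⟩)
  have hcb := hbmax c hcz
  have : a ≠ c := by
    intro h; rw [← h] at hcz; rw [hcz] at hA; exact lt_irrefl 0 hA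
  exact lt_of_lt_of_le (lt_of_le_of_ne hc.1 this) hcb
end
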